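/- (Chernoff Information bounds the Bayes error.) Let μ be a measure on a measurable space X, let p₀, p₁ : X → [0, ∞) be measurable probability densities with respect to μ (∫ p₀ dμ = ∫ p₁ dμ = 1), and let w₀, w₁ ∈ (0, 1) with w₀ + w₁ = 1. Define the Chernoff Information C = -inf_{α ∈ (0,1)} log ∫ p₀(x)^α p₁(x)^{1-α} dμ(x). Then the Bayes error satisfies ∫ min( w₀ p₀(x), w₁ p₁(x) ) dμ(x) ≤ exp(-C). -/

import Mathlib

open MeasureTheory ENNReal NNReal

theorem chernoff_information_bounds_bayes_error
    {X : Type*} [MeasurableSpace X] (μ : Measure X)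
    (p₀ p₁ : X → ℝ≥0) (hp₀ : Measurable p₀) (hp₁ : Measurable p₁)
    (hp₀1 : ∫⁻ x, (p₀ x : ℝ≥0∞) ∂μ = 1) (hp₁1 : ∫⁻ x, (p₁ x : ℝ≥0∞) ∂μ = 1)
    (w₀ w₁ : ℝ) (hw₀ : w₀ ∈ Set.Ioo (0 : ℝ) 1) (hw₁ : w₁ ∈ Set.Ioo (0 : ℝ) 1)
    (hw : w₀ + w₁ = 1)
    (C : ℝ)
    (hC : C = -sInf ((fun α : ℝ =>
        Real.log ((∫⁻ x, (p₀ x : ℝ≥0∞) ^ α * (p₁ x : ℝ≥0∞) ^ (1 - α) ∂μ).toReal))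
          '' Set.Ioo 0 1)) :
    ∫⁻ x, (ENNReal.ofReal w₀ * (p₀ x : ℝ≥0∞)) ⊓ (ENNReal.ofReal w₁ * (p₁ x : ℝ≥0∞)) ∂μ ≤
      ENNReal.ofReal (Real.exp (-C)) := by
  set I : ℝ → ℝ≥0∞ := fun α => ∫⁻ x, (p₀ x : ℝ≥0∞) ^ α * (p₁ x : ℝ≥0∞) ^ (1 - α) ∂μ with hI
  set L : ℝ≥0∞ := ∫⁻ x, (ENNReal.ofReal w₀ * (p₀ x : ℝ≥0∞)) ⊓ (ENNReal.ofReal w₁ * (p₁ x : ℝ≥0∞)) ∂μ with hL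
  -- Step 1: for each α ∈ (0,1), L ≤ I α
  have step1 : ∀ α ∈ Set.Ioo (0:ℝ) 1, L ≤ I α := by
    intro α hα
    apply lintegral_mono
    intro x
    set a : ℝ≥0∞ := ENNReal.ofReal w₀ * (p₀ x : ℝ≥0∞) with ha
    set b : ℝ≥0∞ := ENNReal.ofReal w₁ * (p₁ x : ℝ≥0∞) with hb
    set m : ℝ≥0∞ := a ⊓ b with hm
    rcases eq_or_ne m 0 with h0 | h0
    · simp only [← hm, h0]; exact h0.trans_le (zero_le : (0:ℝ≥0∞) ≤ _)
    have hmt : m ≠ ⊤ := by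
      refine ne_top_of_le_ne_top ?_ (min_le_left a b)
      exact ENNReal.mul_ne_top ENNReal.ofReal_ne_top ENNReal.coe_ne_top
    have hmm : m = m ^ α * m ^ (1 - α) := by
      rw [← ENNReal.rpow_add _ _ h0 hmt]
      simp
    calc m = m ^ α * m ^ (1 - α) := hmm
      _ ≤ a ^ α * b ^ (1 - α) := by
          exact mul_le_mul' (ENNReal.rpow_le_rpow (min_le_left a b) hα.1.le)
            (ENNReal.rpow_le_rpow (min_le_right a b) (by linarith [hα.2]))
      _ ≤ (p₀ x : ℝ≥0∞) ^ α * (p₁ x : ℝ≥0∞) ^ (1 - α) := by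
          refine mul_le_mul' (ENNReal.rpow_le_rpow ?_ hα.1.le)
            (ENNReal.rpow_le_rpow ?_ (by linarith [hα.2]))
          · calc a ≤ 1 * (p₀ x : ℝ≥0∞) := by
                  exact mul_le_mul' (by simpa using ENNReal.ofReal_le_one.2 hw₀.2.le) le_rfl
              _ = _ := one_mul _
          · calc b ≤ 1 * (p₁ x : ℝ≥0∞) := by
                  exact mul_le_mul' (by simpa using ENNReal.ofReal_le_one.2 hw₁.2.le) le_rfl
              _ = _ := one_mul _
  -- Step 2: I α ≤ 1 for α ∈ (0,1)
  have step2 : ∀ α ∈ Set.Ioo (0:ℝ) 1, I α ≤ 1 := by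
    intro α hα
    have hα0 : (0:ℝ) ≤ α := hα.1.le
    have hα1 : (0:ℝ) ≤ 1 - α := by linarith [hα.2]
    have ptw : ∀ x, (p₀ x : ℝ≥0∞) ^ α * (p₁ x : ℝ≥0∞) ^ (1 - α)
        ≤ ENNReal.ofReal α * (p₀ x : ℝ≥0∞) + ENNReal.ofReal (1 - α) * (p₁ x : ℝ≥0∞) := by
      intro x
      set aα : ℝ≥0 := ⟨α, hα0⟩ with haα
      set bα : ℝ≥0 := ⟨1 - α, hα1⟩ with hbα
      have key := NNReal.geom_mean_le_arith_mean2_weighted aα bα (p₀ x) (p₁ x)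
        (by rw [haα, hbα]; apply NNReal.eq; change α + (1 - α) = (1:ℝ); ring)
      have e0 : ENNReal.ofReal α = (aα : ℝ≥0∞) := by
        rw [ENNReal.ofReal, Real.toNNReal_of_nonneg hα0]; rfl
      have e1 : ENNReal.ofReal (1 - α) = (bα : ℝ≥0∞) := by
        rw [ENNReal.ofReal, Real.toNNReal_of_nonneg hα1]; rfl
      have hca : (aα : ℝ) = α := rfl
      have hcb : (bα : ℝ) = 1 - α := rfl
      calc (p₀ x : ℝ≥0∞) ^ α * (p₁ x : ℝ≥0∞) ^ (1 - α)
          = ((p₀ x ^ (aα : ℝ) * p₁ x ^ (bα : ℝ) : ℝ≥0) : ℝ≥0∞) := by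
            rw [ENNReal.coe_mul,
              ENNReal.coe_rpow_of_nonneg _ (show (0:ℝ) ≤ (aα : ℝ) from hα0),
              ENNReal.coe_rpow_of_nonneg _ (show (0:ℝ) ≤ (bα : ℝ) from hα1), hca, hcb]
        _ ≤ ((aα * p₀ x + bα * p₁ x : ℝ≥0) : ℝ≥0∞) := ENNReal.coe_le_coe.2 key
        _ = ENNReal.ofReal α * (p₀ x : ℝ≥0∞) + ENNReal.ofReal (1 - α) * (p₁ x : ℝ≥0∞) := by
            rw [e0, e1]; push_cast; ring
    calc I α ≤ ∫⁻ x, ENNReal.ofReal α * (p₀ x : ℝ≥0∞) + ENNReal.ofReal (1 - α) * (p₁ x : ℝ≥0∞) ∂μ :=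
          lintegral_mono ptw
      _ = ENNReal.ofReal α * 1 + ENNReal.ofReal (1 - α) * 1 := by
          rw [lintegral_add_left (by fun_prop), lintegral_const_mul _ (by fun_prop),
            lintegral_const_mul _ (by fun_prop), hp₀1, hp₁1]
      _ ≤ 1 := by
          rw [mul_one, mul_one, ← ENNReal.ofReal_add hα0 hα1]
          simp
  have hhalf : (1/2 : ℝ) ∈ Set.Ioo (0:ℝ) 1 := by norm_num
  have hLfin : L ≠ ⊤ := ne_top_of_le_ne_top one_ne_top ((step1 _ hhalf).trans (step2 _ hhalf))
  -- the set S
  set S := (fun α : ℝ => Real.log ((I α).toReal)) '' Set.Ioo 0 1 with hS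
  have hexp : Real.exp (-C) = Real.exp (sInf S) := by rw [hC, neg_neg]
  rcases eq_or_ne L 0 with hL0 | hL0
  · rw [hL0]; exact zero_le
  -- L > 0 case
  have hm : (0:ℝ) < L.toReal := ENNReal.toReal_pos hL0 hLfin
  have hlb : ∀ t ∈ S, Real.log L.toReal ≤ t := by
    rintro t ⟨α, hα, rfl⟩
    have hIfin : I α ≠ ⊤ := ne_top_of_le_ne_top one_ne_top (step2 _ hα)
    have : L.toReal ≤ (I α).toReal := ENNReal.toReal_mono hIfin (step1 _ hα)
    exact Real.log_le_log hm this
  have hSne : S.Nonempty := ⟨_, ⟨1/2, hhalf, rfl⟩⟩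
  have hsinf : Real.log L.toReal ≤ sInf S := le_csInf hSne hlb
  have : L.toReal ≤ Real.exp (sInf S) := by
    calc L.toReal = Real.exp (Real.log L.toReal) := (Real.exp_log hm).symm
      _ ≤ Real.exp (sInf S) := Real.exp_le_exp.2 hsinf
  rw [hexp]
  calc L = ENNReal.ofReal L.toReal := (ENNReal.ofReal_toReal hLfin).symm
    _ ≤ ENNReal.ofReal (Real.exp (sInf S)) := ENNReal.ofReal_le_ofReal this
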